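/- Let n ≥ 1, let V = ℝ^{4n} with its standard inner product and standard orthonormal basis (e_α), and let I₁, I₂, I₃ : V →ₗ[ℝ] V be skew-adjoint linear maps satisfying I_i ∘ I_i = -id (i = 1,2,3) and I₁ ∘ I₂ ∘ I₃ = -id. For α ∈ {1,…,4n} define the vector field X̃_α on V × ℝ³ by X̃_α(x, z) := (e_α, (2⟪I_i x, e_α⟫)_{i=1,2,3}). Then for every point q ∈ V × ℝ³, the real linear span of the vectors {X̃_α(q) : α} together with the Lie bracket values {[X̃_α, X̃_β](q) : α, β} is all of V × ℝ³. In other words, the horizontal distribution spanned by the X̃_α is bracket generating of step two. -/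

import Mathlib

open RealInnerProductSpace

noncomputable def qcAmap (n : ℕ)
    (I : Fin 3 → EuclideanSpace ℝ (Fin (4 * n)) →ₗ[ℝ] EuclideanSpace ℝ (Fin (4 * n)))
    (α : Fin (4 * n)) :
    (EuclideanSpace ℝ (Fin (4 * n)) × EuclideanSpace ℝ (Fin 3)) →ₗ[ℝ]
      (EuclideanSpace ℝ (Fin (4 * n)) × EuclideanSpace ℝ (Fin 3)) where
  toFun p := (0, WithLp.toLp 2 (fun i => 2 * ⟪I i p.1, EuclideanSpace.single α 1⟫))
  map_add' p q := by
    refine Prod.ext (by simp) ?_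
    ext i
    simp [inner_add_left, mul_add]
  map_smul' c p := by
    refine Prod.ext (by simp) ?_
    ext i
    simp [inner_smul_left, mul_comm, mul_left_comm]

noncomputable def qcPhi (n : ℕ)
    (I : Fin 3 → EuclideanSpace ℝ (Fin (4 * n)) →ₗ[ℝ] EuclideanSpace ℝ (Fin (4 * n)))
    (e : EuclideanSpace ℝ (Fin (4 * n))) :
    EuclideanSpace ℝ (Fin (4 * n)) →ₗ[ℝ] EuclideanSpace ℝ (Fin 3) where
  toFun v := WithLp.toLp 2 (fun i => ⟪I i e, v⟫)
  map_add' p q := by ext i; simp [inner_add_right]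
  map_smul' c p := by ext i; simp [inner_smul_right]

open RealInnerProductSpace in
theorem horizontal_fields_bracket_generating
    (n : ℕ) (hn : 1 ≤ n)
    (I : Fin 3 → EuclideanSpace ℝ (Fin (4 * n)) →ₗ[ℝ] EuclideanSpace ℝ (Fin (4 * n)))
    (hskew : ∀ i : Fin 3, ∀ v w : EuclideanSpace ℝ (Fin (4 * n)),
      ⟪I i v, w⟫ = -⟪v, I i w⟫)
    (hsq : ∀ i : Fin 3, (I i) ∘ₗ (I i) = -LinearMap.id)
    (hcomm : (I 0) ∘ₗ (I 1) ∘ₗ (I 2) = -LinearMap.id)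
    (X : Fin (4 * n) → (EuclideanSpace ℝ (Fin (4 * n)) × EuclideanSpace ℝ (Fin 3)) →
      (EuclideanSpace ℝ (Fin (4 * n)) × EuclideanSpace ℝ (Fin 3)))
    (hX : ∀ α, ∀ p, X α p =
      (EuclideanSpace.single α 1,
        WithLp.toLp 2 (fun i : Fin 3 => 2 * ⟪I i p.1, EuclideanSpace.single α 1⟫))) :
    ∀ q : EuclideanSpace ℝ (Fin (4 * n)) × EuclideanSpace ℝ (Fin 3),
      Submodule.span ℝ
        ({v | ∃ α, v = X α q} ∪
          {v | ∃ α β, v = VectorField.lieBracket ℝ (X α) (X β) q}) = ⊤ := by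
  -- pointwise algebraic identities
  have hsq' : ∀ (i : Fin 3) v, I i (I i v) = -v := by
    intro i v
    simpa using LinearMap.congr_fun (hsq i) v
  have hcomm' : ∀ v, I 0 (I 1 (I 2 v)) = -v := by
    intro v
    simpa using LinearMap.congr_fun hcomm v
  have h2 : ∀ v, I 0 (I 1 v) = I 2 v := by
    intro w
    have h := hcomm' (-(I 2 w))
    rw [map_neg, map_neg, map_neg, hsq' 2 w] at h
    simpa [neg_neg] using h
  have h102 : ∀ v, I 1 (I 0 (I 1 v)) = I 0 v := by
    intro v
    have h : I 0 (I 1 (I 0 (I 1 v))) = -v := by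
      rw [h2 (I 0 (I 1 v))]
      rw [h2 v, hsq' 2 v]
    have := congrArg (I 0) h
    rw [hsq' 0 (I 1 (I 0 (I 1 v))), map_neg] at this
    exact neg_injective this
  have hvv : ∀ (k : Fin 3) (v : EuclideanSpace ℝ (Fin (4 * n))), ⟪v, I k v⟫ = 0 := by
    intro k v
    have h := hskew k v v
    have h2 := real_inner_comm (I k v) v
    linarith
  intro q
  -- derivatives
  have hfd : ∀ α p, fderiv ℝ (X α) p = (qcAmap n I α).toContinuousLinearMap := by
    intro α p
    have heq : X α = fun p : EuclideanSpace ℝ (Fin (4 * n)) × EuclideanSpace ℝ (Fin 3) =>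
        ((EuclideanSpace.single α 1 : EuclideanSpace ℝ (Fin (4 * n))),
          (0 : EuclideanSpace ℝ (Fin 3))) + (qcAmap n I α).toContinuousLinearMap p := by
      funext p
      rw [hX]
      refine Prod.ext (by simp [qcAmap]) ?_
      ext i
      simp [qcAmap]
    have : HasFDerivAt (X α) ((qcAmap n I α).toContinuousLinearMap) p := by
      rw [heq]
      exact ((qcAmap n I α).toContinuousLinearMap.hasFDerivAt).const_add _
    exact this.fderiv
  have hbr : ∀ α β, VectorField.lieBracket ℝ (X α) (X β) q =
      ((0 : EuclideanSpace ℝ (Fin (4 * n))),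
        WithLp.toLp 2 (fun i : Fin 3 => 4 * ⟪I i (EuclideanSpace.single α 1), EuclideanSpace.single β 1⟫)) := by
    intro α β
    simp only [VectorField.lieBracket_eq]; rw [hfd, hfd, hX, hX]
    refine Prod.ext (by simp [qcAmap]) ?_
    ext i
    have h1 : ⟪I i (EuclideanSpace.single β 1), (EuclideanSpace.single α 1 :
        EuclideanSpace ℝ (Fin (4 * n)))⟫ =
        -⟪I i (EuclideanSpace.single α 1), (EuclideanSpace.single β 1 :
        EuclideanSpace ℝ (Fin (4 * n)))⟫ := by
      rw [hskew i, real_inner_comm]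
    simp only [LinearMap.coe_toContinuousLinearMap', qcAmap, LinearMap.coe_mk, AddHom.coe_mk,
      Prod.snd_sub, PiLp.sub_apply]
    rw [h1]
    ring
  -- notation
  set s : Submodule ℝ (EuclideanSpace ℝ (Fin (4 * n)) × EuclideanSpace ℝ (Fin 3)) :=
    Submodule.span ℝ
      ({v | ∃ α, v = X α q} ∪
        {v | ∃ α β, v = VectorField.lieBracket ℝ (X α) (X β) q}) with hsdef
  have hXmem : ∀ α, X α q ∈ s := fun α => Submodule.subset_span (Or.inl ⟨α, rfl⟩)
  have hBmem : ∀ α β, VectorField.lieBracket ℝ (X α) (X β) q ∈ s :=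
    fun α β => Submodule.subset_span (Or.inr ⟨α, β, rfl⟩)
  have hα₀ : 0 < 4 * n := by omega
  set α₀ : Fin (4 * n) := ⟨0, hα₀⟩ with hα₀def
  set e : EuclideanSpace ℝ (Fin (4 * n)) := EuclideanSpace.single α₀ 1 with hedef
  have hee : ⟪e, e⟫ = 1 := by simp [hedef]
  have hdiag : ∀ k : Fin 3, ⟪I k e, I k e⟫ = 1 := by
    intro k
    rw [hskew k e (I k e), hsq' k e, inner_neg_right, neg_neg, hee]
  have c01 : ⟪I 0 e, I 1 e⟫ = 0 := by
    rw [hskew 0 e (I 1 e), h2 e]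
    have := hvv 2 e
    linarith
  have c02 : ⟪I 0 e, I 2 e⟫ = 0 := by
    rw [hskew 0 e (I 2 e), ← h2 e, hsq' 0 (I 1 e), inner_neg_right, neg_neg]
    exact hvv 1 e
  have c12 : ⟪I 1 e, I 2 e⟫ = 0 := by
    rw [hskew 1 e (I 2 e), ← h2 e, h102 e]
    have := hvv 0 e
    linarith
  have c10 : ⟪I 1 e, I 0 e⟫ = 0 := by rw [real_inner_comm]; exact c01
  have c20 : ⟪I 2 e, I 0 e⟫ = 0 := by rw [real_inner_comm]; exact c02
  have c21 : ⟪I 2 e, I 1 e⟫ = 0 := by rw [real_inner_comm]; exact c12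
  -- surjectivity of Phi
  have hsurj : ∀ z : EuclideanSpace ℝ (Fin 3), ∃ v, qcPhi n I e v = z := by
    intro z
    refine ⟨z 0 • I 0 e + z 1 • I 1 e + z 2 • I 2 e, ?_⟩
    ext i
    have : qcPhi n I e (z 0 • I 0 e + z 1 • I 1 e + z 2 • I 2 e) i =
        ⟪I i e, z 0 • I 0 e + z 1 • I 1 e + z 2 • I 2 e⟫ := rfl
    rw [this]
    fin_cases i <;>
      simp [inner_add_right, inner_smul_right, c01, c02, c12, c10, c20, c21, hdiag,
          (fun k => by have := hdiag k; rwa [real_inner_self_eq_norm_sq] at this : ∀ k : Fin 3, ‖I k e‖ ^ 2 = 1)]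
  -- span of standard basis
  have hbasis : ∀ v : EuclideanSpace ℝ (Fin (4 * n)),
      v ∈ Submodule.span ℝ (Set.range fun β : Fin (4 * n) =>
        (EuclideanSpace.single β 1 : EuclideanSpace ℝ (Fin (4 * n)))) := by
    intro v
    have hr : (Set.range fun β : Fin (4 * n) =>
        (EuclideanSpace.single β 1 : EuclideanSpace ℝ (Fin (4 * n)))) =
        Set.range ⇑(EuclideanSpace.basisFun (Fin (4 * n)) ℝ).toBasis := by
      ext x
      simp [EuclideanSpace.basisFun_apply]
    rw [hr, Module.Basis.span_eq]
    trivial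
  -- vertical directions
  have hPhimem : ∀ v, ((0 : EuclideanSpace ℝ (Fin (4 * n))), qcPhi n I e v) ∈ s := by
    intro v
    refine Submodule.span_induction ?_ ?_ ?_ ?_ (hbasis v)
    · rintro x ⟨β, rfl⟩
      have heq : ((0 : EuclideanSpace ℝ (Fin (4 * n))),
          qcPhi n I e (EuclideanSpace.single β 1)) =
          (4⁻¹ : ℝ) • VectorField.lieBracket ℝ (X α₀) (X β) q := by
        rw [hbr]
        refine Prod.ext (by simp) ?_
        ext i
        show (⟪I i e, EuclideanSpace.single β 1⟫ : ℝ) =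
          (4⁻¹ : ℝ) * (4 * ⟪I i e, EuclideanSpace.single β 1⟫)
        ring
      rw [heq]
      exact s.smul_mem _ (hBmem α₀ β)
    · have : ((0 : EuclideanSpace ℝ (Fin (4 * n))), qcPhi n I e 0) =
          (0 : EuclideanSpace ℝ (Fin (4 * n)) × EuclideanSpace ℝ (Fin 3)) := by
        simp
      rw [this]; exact s.zero_mem
    · intro x y _ _ hx hy
      have : ((0 : EuclideanSpace ℝ (Fin (4 * n))), qcPhi n I e (x + y)) =
          ((0 : EuclideanSpace ℝ (Fin (4 * n))), qcPhi n I e x) +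
          ((0 : EuclideanSpace ℝ (Fin (4 * n))), qcPhi n I e y) := by
        simp
      rw [this]; exact s.add_mem hx hy
    · intro a x _ hx
      have : ((0 : EuclideanSpace ℝ (Fin (4 * n))), qcPhi n I e (a • x)) =
          a • ((0 : EuclideanSpace ℝ (Fin (4 * n))), qcPhi n I e x) := by
        simp [Prod.smul_mk]
      rw [this]; exact s.smul_mem a hx
  have hzmem : ∀ z : EuclideanSpace ℝ (Fin 3),
      ((0 : EuclideanSpace ℝ (Fin (4 * n))), z) ∈ s := by
    intro z
    obtain ⟨v, rfl⟩ := hsurj z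
    exact hPhimem v
  -- horizontal directions
  have hvmem : ∀ v : EuclideanSpace ℝ (Fin (4 * n)),
      (v, (0 : EuclideanSpace ℝ (Fin 3))) ∈ s := by
    intro v
    refine Submodule.span_induction ?_ ?_ ?_ ?_ (hbasis v)
    · rintro x ⟨β, rfl⟩
      have heq : ((EuclideanSpace.single β 1 : EuclideanSpace ℝ (Fin (4 * n))),
          (0 : EuclideanSpace ℝ (Fin 3))) =
          X β q - (((0 : EuclideanSpace ℝ (Fin (4 * n))),
            WithLp.toLp 2 (fun i : Fin 3 => 2 * ⟪I i q.1, EuclideanSpace.single β 1⟫)) :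
              EuclideanSpace ℝ (Fin (4 * n)) × EuclideanSpace ℝ (Fin 3)) := by
        rw [hX]
        refine Prod.ext (by simp) ?_
        ext i
        simp
      rw [heq]
      exact s.sub_mem (hXmem β) (hzmem _)
    · exact s.zero_mem
    · intro x y _ _ hx hy
      have : ((x + y : EuclideanSpace ℝ (Fin (4 * n))), (0 : EuclideanSpace ℝ (Fin 3))) =
          (x, (0 : EuclideanSpace ℝ (Fin 3))) + (y, (0 : EuclideanSpace ℝ (Fin 3))) := by
        simp
      rw [this]; exact s.add_mem hx hy
    · intro a x _ hx
      have : ((a • x : EuclideanSpace ℝ (Fin (4 * n))), (0 : EuclideanSpace ℝ (Fin 3))) =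
          a • (x, (0 : EuclideanSpace ℝ (Fin 3))) := by
        simp [Prod.smul_mk]
      rw [this]; exact s.smul_mem a hx
  -- conclusion
  rw [Submodule.eq_top_iff']
  intro p
  have hp : p = (p.1, (0 : EuclideanSpace ℝ (Fin 3))) +
      ((0 : EuclideanSpace ℝ (Fin (4 * n))), p.2) := by
    refine Prod.ext (by simp) (by simp)
  rw [hp]
  exact s.add_mem (hvmem p.1) (hzmem p.2)
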